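/- For any real numbers p ∈ (0, 1/2), q ∈ (0,1), and λ > 1, it holds that p·((1-q) + q·(1-p)/p)^λ + (1-p)·((1-q) + q·p/(1-p))^λ ≤ (1-q) + q·((1-p)/p)^{λ-1}. -/
import Mathlib


/-- For `p ∈ (0, 1/2)`, `q ∈ (0,1)`, and `λ > 1`,
`p·((1-q) + q·(1-p)/p)^λ + (1-p)·((1-q) + q·p/(1-p))^λ ≤ (1-q) + q·((1-p)/p)^(λ-1)`. -/
theorem mixture_renyi_moment_inequality (p q l : ℝ)
    (hp0 : 0 < p) (hp : p < 1 / 2) (hq0 : 0 < q) (hq1 : q < 1) (hl : 1 < l) :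
    p * ((1 - q) + q * ((1 - p) / p)) ^ l
      + (1 - p) * ((1 - q) + q * (p / (1 - p))) ^ l
    ≤ (1 - q) + q * ((1 - p) / p) ^ (l - 1) := by
  have hp1 : p < 1 := by linarith
  have h1p : (0:ℝ) < 1 - p := by linarith
  set r := (1 - p) / p with hr_def
  have hr1 : 1 < r := (one_lt_div hp0).mpr (by linarith)
  have hr0 : (0:ℝ) < r := by linarith
  have hs : p / (1 - p) = 1 / r := by
    rw [hr_def]; field_simp
  have hq0' : (0:ℝ) ≤ 1 - q := by linarith
  have conv := convexOn_rpow hl.le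
  have key1 : ((1 - q) * 1 + q * r) ^ l ≤ (1 - q) * 1 ^ l + q * r ^ l := by
    have := conv.2 (Set.mem_Ici.mpr zero_le_one) (Set.mem_Ici.mpr hr0.le)
      hq0' hq0.le (by ring)
    simpa [smul_eq_mul] using this
  have key2 : ((1 - q) * 1 + q * (1 / r)) ^ l ≤ (1 - q) * 1 ^ l + q * (1 / r) ^ l := by
    have := conv.2 (Set.mem_Ici.mpr zero_le_one)
      (Set.mem_Ici.mpr (by positivity : (0:ℝ) ≤ 1 / r)) hq0' hq0.le (by ring)
    simpa [smul_eq_mul] using this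
  rw [Real.one_rpow] at key1 key2
  have hpr : p * r = 1 - p := by
    rw [hr_def]; field_simp
  -- rewrite goal arguments
  have e1 : (1 - q) + q * ((1 - p) / p) = (1 - q) * 1 + q * r := by rw [hr_def]; ring
  have e2 : (1 - q) + q * (p / (1 - p)) = (1 - q) * 1 + q * (1 / r) := by rw [hs]; ring
  rw [e1, e2]
  have hrlpos : (0:ℝ) < r ^ l := Real.rpow_pos_of_pos hr0 l
  have hrl1pos : (0:ℝ) < r ^ (l - 1) := Real.rpow_pos_of_pos hr0 (l - 1)
  have hinv : (1 / r) ^ l = 1 / r ^ l := by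
    rw [Real.div_rpow zero_le_one hr0.le, Real.one_rpow]
  have hrl : r ^ l = r ^ (l - 1) * r := by
    rw [← Real.rpow_add_one hr0.ne' (l - 1)]; ring_nf
  -- core: (1-p)/r^l ≤ p * r^(l-1)
  have h2l : r ^ (1:ℝ) ≤ r ^ (2 * l - 1) :=
    Real.rpow_le_rpow_of_exponent_le hr1.le (by linarith)
  rw [Real.rpow_one] at h2l
  have h2l' : r ^ (2 * l - 1) = r ^ (l - 1) * r ^ l := by
    rw [← Real.rpow_add hr0]; ring_nf
  have hcore : (1 - p) / r ^ l ≤ p * r ^ (l - 1) := by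
    rw [div_le_iff₀ hrlpos]
    calc 1 - p = p * r := hpr.symm
      _ ≤ p * (r ^ (2 * l - 1)) := by nlinarith
      _ = p * r ^ (l - 1) * r ^ l := by rw [h2l']; ring
  have hmain : p * (r ^ l) + (1 - p) * (1 / r ^ l) ≤ r ^ (l - 1) := by
    have : p * (r ^ l) = (1 - p) * r ^ (l - 1) := by rw [hrl, ← hpr]; ring
    rw [this]
    have : (1 - p) * (1 / r ^ l) = (1 - p) / r ^ l := by ring
    rw [this]
    nlinarith [hcore]
  calc p * ((1 - q) * 1 + q * r) ^ l + (1 - p) * ((1 - q) * 1 + q * (1 / r)) ^ l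
      ≤ p * ((1 - q) * 1 + q * r ^ l) + (1 - p) * ((1 - q) * 1 + q * (1 / r) ^ l) := by
        have h1 := mul_le_mul_of_nonneg_left key1 hp0.le
        have h2 := mul_le_mul_of_nonneg_left key2 h1p.le
        linarith
    _ = (1 - q) + q * (p * (r ^ l) + (1 - p) * (1 / r ^ l)) := by rw [hinv]; ring
    _ ≤ (1 - q) + q * r ^ (l - 1) := by nlinarith [hmain]
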